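/- Let 1 ≤ p < ∞ and let σ : 𝔛 × Ω × [0,τ] → ℂ be a measurable symbol such that for all x, y ∈ 𝔛 the integral K(x,y) = ∫_Ω ∫₀^τ q^{(1/2−is)·h_ω(x)}·q^{(1/2+is)·h_ω(y)}·σ(x,ω,s) dν(ω) dμ(s) converges absolutely. Suppose there exist sequences {g_k} in ℓ^{p′}(𝔛) and {f_k} in ℓ^{p}(𝔛) with Σ_k ‖g_k‖_{ℓ^{p′}(𝔛)}·‖f_k‖_{ℓ^{p}(𝔛)} < ∞ and K(x,y) = Σ_k f_k(x)·g_k(y) for all x, y ∈ 𝔛 (so that T_σ : ℓ^p(𝔛) → ℓ^p(𝔛) is nuclear). Then the function x ↦ ∫_Ω ∫₀^τ q^{h_ω(x)}·σ(x,ω,s) dν(ω) dμ(s) belongs to ℓ¹(𝔛), and the nuclear trace of T_σ satisfies Σ_k Σ_{x∈𝔛} f_k(x)·g_k(x) = Σ_{x∈𝔛} ∫_Ω ∫₀^τ q^{h_ω(x)}·σ(x,ω,s) dν(ω) dμ(s). -/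

import Mathlib

noncomputable section
open MeasureTheory Complex Set
open scoped ENNReal NNReal

/-- `q ^ (z ⬝ m)` : the complex power `q^{z·h_ω(x)}` appearing in the Fourier–Helgason
kernels of the homogeneous tree of degree `q+1`. -/
def pw (q : ℕ) (z : ℂ) (m : ℤ) : ℂ := (q : ℂ) ^ (z * (m : ℂ))

/-- The measure `ν ⊗ μ|_{[0,τ]}` on `Ω × [0,τ]`. -/
def PM {Ω : Type*} [MeasurableSpace Ω] (ν : Measure Ω) (μ : Measure ℝ) (τ : ℝ) :
    Measure (Ω × ℝ) := ν.prod (μ.restrict (Set.Icc 0 τ))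

/-- if the kernel of the nuclear operator `T_σ : ℓ^p(𝔛) → ℓ^p(𝔛)` decomposes
as `K(x,y) = Σ_k f_k(x) g_k(y)` with `Σ_k ‖g_k‖_{p′} ‖f_k‖_p < ∞`, then
`x ↦ ∫∫ q^{h_ω(x)} σ(x,ω,s) dν dμ ∈ ℓ¹(𝔛)` and the nuclear trace satisfies
`Σ_k Σ_x f_k(x) g_k(x) = Σ_x ∫∫ q^{h_ω(x)} σ(x,ω,s) dν dμ`. -/

lemma holder_aux {𝔛 : Type*} (p p' : ℝ≥0∞) [Fact (1 ≤ p)] [Fact (1 ≤ p')]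
    (hp : p ≠ ∞) (hp' : 1 / p + 1 / p' = 1)
    (f : lp (fun _ : 𝔛 => ℂ) p) (g : lp (fun _ : 𝔛 => ℂ) p') :
    (Summable fun x => ‖f x‖ * ‖g x‖) ∧ ∑' x, ‖f x‖ * ‖g x‖ ≤ ‖f‖ * ‖g‖ := by
  have hp1 : 1 ≤ p := Fact.out
  have hp'1 : 1 ≤ p' := Fact.out
  rcases eq_or_lt_of_le hp1 with hpe | hplt
  · -- p = 1, p' = ∞
    have hp'top : p' = ∞ := by
      rw [← hpe] at hp'
      simp only [one_div, inv_one] at hp'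
      have : p'⁻¹ = 0 := by
        have := ENNReal.add_right_inj (a := 1) (b := p'⁻¹) (c := 0) ENNReal.one_ne_top
        rw [add_zero] at this
        exact this.mp hp'
      simpa [ENNReal.inv_eq_zero] using this
    subst hp'top
    have hft : p.toReal = 1 := by rw [← hpe]; simp
    have hsf : Summable fun x => ‖f x‖ := by
      have := lp.hasSum_norm (by rw [hft]; norm_num) f
      rw [hft] at this
      simpa using this.summable
    have hfs : ∑' x, ‖f x‖ = ‖f‖ := by
      have := lp.hasSum_norm (p := p) (by rw [hft]; norm_num) f
      rw [hft] at this
      simpa using this.tsum_eq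
    have hle : ∀ x, ‖f x‖ * ‖g x‖ ≤ ‖f x‖ * ‖g‖ := fun x =>
      mul_le_mul_of_nonneg_left (lp.norm_apply_le_norm ENNReal.top_ne_zero g x)
        (norm_nonneg _)
    refine ⟨Summable.of_nonneg_of_le (fun x => by positivity) hle (hsf.mul_right _), ?_⟩
    calc ∑' x, ‖f x‖ * ‖g x‖ ≤ ∑' x, ‖f x‖ * ‖g‖ :=
          Summable.tsum_le_tsum hle (Summable.of_nonneg_of_le (fun x => by positivity) hle
            (hsf.mul_right _)) (hsf.mul_right _)
      _ = (∑' x, ‖f x‖) * ‖g‖ := tsum_mul_right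
      _ = ‖f‖ * ‖g‖ := by rw [hfs]
  · -- 1 < p
    have hpne0 : p ≠ 0 := by positivity
    have hp'top : p' ≠ ∞ := by
      rintro rfl
      simp only [one_div, ENNReal.inv_top, add_zero, ENNReal.inv_eq_one] at hp'
      exact hplt.ne' hp'
    have hp'ne0 : p' ≠ 0 := by positivity
    have hpq : p.toReal.HolderConjugate p'.toReal := by
      rw [Real.holderConjugate_iff]
      constructor
      · exact (ENNReal.toReal_one ▸ ENNReal.toReal_lt_toReal ENNReal.one_ne_top hp).mpr hplt
      · rw [← ENNReal.toReal_inv, ← ENNReal.toReal_inv,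
          ← ENNReal.toReal_add (by simp [hpne0]) (by simp [hp'ne0])]
        rw [one_div, one_div] at hp'
        rw [hp', ENNReal.toReal_one]
    exact lp.tsum_mul_le_mul_norm hpq f g

theorem pseudodiff_nuclear_trace
    (q : ℕ) (hq : 2 ≤ q)
    {𝔛 : Type*} [Countable 𝔛]
    {Ω : Type*} [MeasurableSpace Ω]
    (ν : Measure Ω) [IsProbabilityMeasure ν]
    (μ : Measure ℝ) [IsFiniteMeasure μ]
    (τ : ℝ) (hτ : τ = Real.pi / Real.log q)
    (h : Ω → 𝔛 → ℤ) (hh : ∀ x, Measurable fun ω => h ω x)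
    (σ : 𝔛 → Ω → ℝ → ℂ) (hσ : ∀ x, Measurable fun pr : Ω × ℝ => σ x pr.1 pr.2)
    (p p' : ℝ≥0∞) [Fact (1 ≤ p)] [Fact (1 ≤ p')]
    (hp : p ≠ ∞) (hp' : 1 / p + 1 / p' = 1)
    -- absolute convergence of the integral defining the kernel `K`
    (habs : ∀ x y : 𝔛, Integrable
      (fun pr : Ω × ℝ =>
        pw q (1 / 2 - I * pr.2) (h pr.1 x) * pw q (1 / 2 + I * pr.2) (h pr.1 y) *
          σ x pr.1 pr.2) (PM ν μ τ))
    (K : 𝔛 → 𝔛 → ℂ)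
    (hKdef : ∀ x y : 𝔛, K x y =
      ∫ pr, pw q (1 / 2 - I * pr.2) (h pr.1 x) * pw q (1 / 2 + I * pr.2) (h pr.1 y) *
        σ x pr.1 pr.2 ∂PM ν μ τ)
    -- absolute convergence of `∫∫ q^{h_ω(x)} σ(x,ω,s) dν dμ`
    (habs' : ∀ x : 𝔛, Integrable
      (fun pr : Ω × ℝ => pw q 1 (h pr.1 x) * σ x pr.1 pr.2) (PM ν μ τ))
    -- the kernel decomposition making `T_σ` nuclear
    (g : ℕ → lp (fun _ : 𝔛 => ℂ) p') (f : ℕ → lp (fun _ : 𝔛 => ℂ) p)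
    (hsum : Summable fun k : ℕ => ‖g k‖ * ‖f k‖)
    (hK : ∀ x y : 𝔛, K x y = ∑' k : ℕ, f k x * g k y) :
    Summable (fun x : 𝔛 =>
      ‖∫ pr, pw q 1 (h pr.1 x) * σ x pr.1 pr.2 ∂PM ν μ τ‖) ∧
    (∑' k : ℕ, ∑' x : 𝔛, f k x * g k x) =
      ∑' x : 𝔛, ∫ pr, pw q 1 (h pr.1 x) * σ x pr.1 pr.2 ∂PM ν μ τ := by

  classical
  have hq0 : (q : ℂ) ≠ 0 := by
    exact_mod_cast (by omega : q ≠ 0)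
  -- diagonal identity for the kernel
  have hdiag : ∀ (x : 𝔛) (pr : Ω × ℝ),
      pw q (1 / 2 - I * pr.2) (h pr.1 x) * pw q (1 / 2 + I * pr.2) (h pr.1 x) =
        pw q 1 (h pr.1 x) := by
    intro x pr
    unfold pw
    rw [← Complex.cpow_add _ _ hq0, ← add_mul]
    norm_num
  have KK : ∀ x : 𝔛, K x x = ∫ pr, pw q 1 (h pr.1 x) * σ x pr.1 pr.2 ∂PM ν μ τ := by
    intro x
    rw [hKdef x x]
    congr 1
    funext pr
    rw [hdiag]
  have hpne0 : p ≠ 0 := by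
    have : (1 : ℝ≥0∞) ≤ p := Fact.out
    positivity
  have hp'ne0 : p' ≠ 0 := by
    have : (1 : ℝ≥0∞) ≤ p' := Fact.out
    positivity
  have hsum' : Summable fun k : ℕ => ‖f k‖ * ‖g k‖ := by
    simpa [mul_comm] using hsum
  have hHold : ∀ k : ℕ, (Summable fun x => ‖f k x‖ * ‖g k x‖) ∧
      ∑' x, ‖f k x‖ * ‖g k x‖ ≤ ‖f k‖ * ‖g k‖ := by
    intro k
    exact holder_aux p p' hp hp' (f k) (g k)
  -- summability of the double family of norms
  have hprodnorm : Summable fun kx : ℕ × 𝔛 => ‖f kx.1 kx.2‖ * ‖g kx.1 kx.2‖ := by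
    rw [summable_prod_of_nonneg (fun kx => by positivity)]
    refine ⟨fun k => (hHold k).1, ?_⟩
    exact Summable.of_nonneg_of_le (fun k => tsum_nonneg fun x => by positivity)
      (fun k => (hHold k).2) hsum'
  have hptk : ∀ x : 𝔛, Summable fun k : ℕ => ‖f k x‖ * ‖g k x‖ := fun x =>
    Summable.of_nonneg_of_le (fun k => by positivity)
      (fun k => mul_le_mul (lp.norm_apply_le_norm hpne0 (f k) x)
        (lp.norm_apply_le_norm hp'ne0 (g k) x) (norm_nonneg _) (norm_nonneg _)) hsum'
  -- summability of x ↦ ∑'_k ‖f k x‖‖g k x‖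
  have hswap : Summable fun xk : 𝔛 × ℕ => ‖f xk.2 xk.1‖ * ‖g xk.2 xk.1‖ :=
    hprodnorm.prod_symm
  have hsx : Summable fun x : 𝔛 => ∑' k : ℕ, ‖f k x‖ * ‖g k x‖ :=
    ((summable_prod_of_nonneg (fun xk => by positivity)).mp hswap).2
  -- pointwise: ‖K x x‖ ≤ ∑'_k ‖f k x‖‖g k x‖
  have hbound : ∀ x : 𝔛, ‖K x x‖ ≤ ∑' k : ℕ, ‖f k x‖ * ‖g k x‖ := by
    intro x
    rw [hK x x]
    calc ‖∑' k : ℕ, f k x * g k x‖ ≤ ∑' k : ℕ, ‖f k x * g k x‖ :=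
          norm_tsum_le_tsum_norm (by simpa [norm_mul] using hptk x)
      _ = ∑' k : ℕ, ‖f k x‖ * ‖g k x‖ := by simp [norm_mul]
  constructor
  · refine Summable.of_nonneg_of_le (fun x => norm_nonneg _) (fun x => ?_) hsx
    rw [← KK x]
    exact hbound x
  · have hrow : ∀ k : ℕ, Summable fun x : 𝔛 => f k x * g k x := fun k =>
      Summable.of_norm (by simpa [norm_mul] using (hHold k).1)
    have hcol : ∀ x : 𝔛, Summable fun k : ℕ => f k x * g k x := fun x =>
      Summable.of_norm (by simpa [norm_mul] using hptk x)
    have huncurry : Summable (Function.uncurry fun k x => f k x * g k x) :=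
      Summable.of_norm (by simpa [Function.uncurry, norm_mul] using hprodnorm)
    have := Summable.tsum_comm' huncurry hrow hcol
    rw [← this]
    exact tsum_congr fun x => by rw [← KK x, hK x x]
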